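/- Let ψ : E → ℝ be three times continuously differentiable and let η : ℝ → E satisfy Newton's law η̇(t) = −λ(η(t) − η_q). Then t ↦ F(η(t)) is twice differentiable and λ · d²/dt² F(η(t)) = − D³ψ(η(t))[η̇(t), η̇(t), η̇(t)] + 2λ ⟪η̇(t), H(η(t)) η̇(t)⟫, where D³ψ denotes the third Fréchet derivative of ψ (whose negative is the Amari–Chentsov tensor in affine coordinates). -/

import Mathlib

open scoped RealInnerProductSpace

section aux
variable {E : Type*} [NormedAddCommGroup E] [InnerProductSpace ℝ E] [CompleteSpace E]

lemma aux_grad_contDiff {ψ : E → ℝ} (hψ : ContDiff ℝ 3 ψ) :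
    ContDiff ℝ 2 (gradient ψ) := by
  have h1 : ContDiff ℝ 2 (fderiv ℝ ψ) := hψ.fderiv_right (by norm_num)
  have h2 : gradient ψ = fun y => (InnerProductSpace.toDual ℝ E).symm (fderiv ℝ ψ y) := rfl
  rw [h2]
  exact (InnerProductSpace.toDual ℝ E).symm.contDiff.comp h1

lemma aux_fderiv_eq_inner_grad {ψ : E → ℝ} (hψ : ContDiff ℝ 3 ψ) :
    fderiv ℝ ψ = fun y => (innerSL ℝ) (gradient ψ y) := by
  funext y
  ext v
  have : HasGradientAt ψ (gradient ψ y) y :=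
    ((hψ.differentiable (by norm_num)) y).hasGradientAt
  rw [this.hasFDerivAt.fderiv]
  simp [InnerProductSpace.toDual_apply_apply, innerSL_apply_apply]
end aux

section aux2
variable {E : Type*} [NormedAddCommGroup E] [InnerProductSpace ℝ E] [CompleteSpace E]

lemma aux_d3 {ψ : E → ℝ} (hψ : ContDiff ℝ 3 ψ) (x a b c : E) :
    iteratedFDeriv ℝ 3 ψ x ![a, b, c] =
      ⟪fderiv ℝ (fderiv ℝ (gradient ψ)) x a b, c⟫ := by
  have hg : ContDiff ℝ 2 (gradient ψ) := aux_grad_contDiff hψ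
  have hdg : Differentiable ℝ (fderiv ℝ (gradient ψ)) :=
    ((hg.fderiv_right (m := 1) (by norm_num)).differentiable (by norm_num))
  have h3 : iteratedFDeriv ℝ 3 ψ x ![a, b, c] =
      fderiv ℝ (fderiv ℝ (fderiv ℝ ψ)) x a b c := by
    rw [iteratedFDeriv_succ_apply_right, iteratedFDeriv_two_apply]
    simp [Fin.init, Fin.last]
  refine h3.trans ?_
  have h1 : fderiv ℝ (fderiv ℝ ψ) = fun z => (innerSL ℝ).comp (fderiv ℝ (gradient ψ) z) := by
    funext z
    rw [aux_fderiv_eq_inner_grad hψ]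
    exact ((innerSL ℝ (E := E)).hasFDerivAt.comp z
      ((hg.differentiable (by norm_num)) z).hasFDerivAt).fderiv
  rw [h1]
  have h2 := ((hasFDerivAt_const (innerSL ℝ (E := E)) x).clm_comp
    (hdg x).hasFDerivAt).fderiv
  rw [h2]
  simp
  rfl
end aux2

/-- Along a Newtonian relaxation `η̇ = −λ(η − ηq)` of a `C³` potential `ψ`, the Bregman
divergence satisfies
`λ (F∘η)''(t) = −D³ψ(η)[η̇, η̇, η̇] + 2λ ⟪η̇, H(η) η̇⟫`,
where `D³ψ` is the third Fréchet derivative (minus the Amari–Chentsov tensor). -/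
theorem second_derivative_of_divergence_amari_chentsov
    (n : ℕ) (ψ : EuclideanSpace ℝ (Fin n) → ℝ) (hψ : ContDiff ℝ 3 ψ)
    (ηq : EuclideanSpace ℝ (Fin n)) (lam : ℝ) (hlam : 0 < lam)
    (H : EuclideanSpace ℝ (Fin n) →
      EuclideanSpace ℝ (Fin n) →L[ℝ] EuclideanSpace ℝ (Fin n))
    (hH : ∀ η, H η = fderiv ℝ (gradient ψ) η)
    (F : EuclideanSpace ℝ (Fin n) → ℝ)
    (hF : ∀ η, F η = ψ ηq - ψ η - ⟪gradient ψ η, ηq - η⟫)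
    (η : ℝ → EuclideanSpace ℝ (Fin n)) (hη : Differentiable ℝ η)
    (hnewton : ∀ t, deriv η t = (-lam) • (η t - ηq)) :
    Differentiable ℝ (fun t => F (η t)) ∧
    Differentiable ℝ (deriv (fun t => F (η t))) ∧
    ∀ t, lam * deriv (deriv (fun s => F (η s))) t =
      -(iteratedFDeriv ℝ 3 ψ (η t) ![deriv η t, deriv η t, deriv η t]) +
        2 * lam * ⟪deriv η t, H (η t) (deriv η t)⟫ := by
  have hg : ContDiff ℝ 2 (gradient ψ) := aux_grad_contDiff hψ
  have hgd : Differentiable ℝ (gradient ψ) := hg.differentiable (by norm_num)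
  have hdg : Differentiable ℝ (fderiv ℝ (gradient ψ)) :=
    (hg.fderiv_right (m := 1) (by norm_num)).differentiable (by norm_num)
  have hη' : ∀ t, HasDerivAt η ((-lam) • (η t - ηq)) t := fun t => by
    have h := (hη t).hasDerivAt; rwa [hnewton t] at h
  have hφeq : (fun t => F (η t)) =
      (fun t => ψ ηq - ψ (η t) - ⟪gradient ψ (η t), ηq - η t⟫) :=
    funext fun t => hF (η t)
  -- first derivative
  have hD1 : ∀ t, HasDerivAt (fun s => F (η s))
      (-lam * ⟪fderiv ℝ (gradient ψ) (η t) (η t - ηq), η t - ηq⟫) t := by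
    intro t
    rw [hφeq]
    have h1 : HasDerivAt (fun s => ψ (η s))
        ((innerSL ℝ (gradient ψ (η t))) ((-lam) • (η t - ηq))) t := by
      have hf := (hψ.differentiable (by norm_num) (η t)).hasFDerivAt
      rw [aux_fderiv_eq_inner_grad hψ] at hf
      exact hf.comp_hasDerivAt t (hη' t)
    have h2 : HasDerivAt (fun s => gradient ψ (η s))
        (fderiv ℝ (gradient ψ) (η t) ((-lam) • (η t - ηq))) t :=
      (hgd (η t)).hasFDerivAt.comp_hasDerivAt t (hη' t)
    have h3 : HasDerivAt (fun s => ηq - η s) (-((-lam) • (η t - ηq))) t :=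
      (hη' t).const_sub ηq
    have h4 := HasDerivAt.inner ℝ h2 h3
    have h5 := ((hasDerivAt_const t (ψ ηq)).sub h1).sub h4
    convert h5 using 1
    · rfl
    · rfl
    · rfl
    rw [← neg_sub (η t) ηq]
    simp only [innerSL_apply_apply, map_smul, map_neg, real_inner_smul_left, real_inner_smul_right,
      inner_neg_left, inner_neg_right, neg_neg, zero_sub, smul_neg, neg_smul, smul_eq_mul]
    ring
  have hd1 : Differentiable ℝ (fun t => F (η t)) := fun t => (hD1 t).differentiableAt
  have hderiv1 : deriv (fun t => F (η t)) =
      fun t => -lam * ⟪fderiv ℝ (gradient ψ) (η t) (η t - ηq), η t - ηq⟫ :=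
    funext fun t => (hD1 t).deriv
  -- second derivative
  have hD2 : ∀ t, HasDerivAt
      (fun s => -lam * ⟪fderiv ℝ (gradient ψ) (η s) (η s - ηq), η s - ηq⟫)
      (-lam * (⟪fderiv ℝ (gradient ψ) (η t) (η t - ηq), (-lam) • (η t - ηq)⟫ +
        ⟪fderiv ℝ (fderiv ℝ (gradient ψ)) (η t) ((-lam) • (η t - ηq)) (η t - ηq) +
          fderiv ℝ (gradient ψ) (η t) ((-lam) • (η t - ηq)), η t - ηq⟫)) t := by
    intro t
    have hw : HasDerivAt (fun s => η s - ηq) ((-lam) • (η t - ηq)) t := (hη' t).sub_const ηq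
    have hA : HasDerivAt (fun s => fderiv ℝ (gradient ψ) (η s))
        (fderiv ℝ (fderiv ℝ (gradient ψ)) (η t) ((-lam) • (η t - ηq))) t :=
      (hdg (η t)).hasFDerivAt.comp_hasDerivAt t (hη' t)
    have happ := hA.clm_apply hw
    have hin := HasDerivAt.inner ℝ happ hw
    exact hin.const_mul (-lam)
  have hd2 : Differentiable ℝ (deriv (fun t => F (η t))) := by
    rw [hderiv1]; exact fun t => (hD2 t).differentiableAt
  refine ⟨hd1, hd2, fun t => ?_⟩
  have hsecond : deriv (deriv (fun s => F (η s))) t =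
      -lam * (⟪fderiv ℝ (gradient ψ) (η t) (η t - ηq), (-lam) • (η t - ηq)⟫ +
        ⟪fderiv ℝ (fderiv ℝ (gradient ψ)) (η t) ((-lam) • (η t - ηq)) (η t - ηq) +
          fderiv ℝ (gradient ψ) (η t) ((-lam) • (η t - ηq)), η t - ηq⟫) := by
    rw [hderiv1]; exact (hD2 t).deriv
  rw [hsecond, hnewton t, hH, aux_d3 hψ]
  simp only [map_smul, map_neg, ContinuousLinearMap.smul_apply, ContinuousLinearMap.neg_apply,
    real_inner_smul_left, real_inner_smul_right, inner_add_left, inner_neg_left, inner_neg_right,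
    neg_smul, neg_neg, smul_neg, smul_eq_mul]
  rw [real_inner_comm (η t - ηq) (fderiv ℝ (gradient ψ) (η t) (η t - ηq))]
  ring
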